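/- arXiv:1701.02376 — 3 statements merged into one kernel-verified Lean document; each statement's English description precedes it below -/
import Mathlib

section
/- Let N ≥ 3, α > 0, and a, b ≥ 0. Define g(t) = (t^(N-2)/2 − ((N-2)/(2(N+α)))·t^(N+α))·a + (t^N/2 − (N/(2(N+α)))·t^(N+α))·b for t ≥ 0. Then g attains its maximum over [0, ∞) at t = 1, and if a + b > 0 the maximum is strict: g(t) < g(1) for all t ≠ 1. -/
open Real

/-- Core scalar inequality: for `0 < p < q` and `0 ≤ t`, `t ≠ 1`,
`t^p/2 - p/(2q) * t^q < 1/2 - p/(2q)`. -/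
lemma choquard_aux_strict {p q : ℝ} (hp : 0 < p) (hpq : p < q) {t : ℝ}
    (ht : 0 ≤ t) (ht1 : t ≠ 1) :
    t ^ p / 2 - p / (2 * q) * t ^ q < 1 / 2 - p / (2 * q) := by
  have hq : 0 < q := hp.trans hpq
  set u : ℝ := t ^ p with hu
  have hu0 : 0 ≤ u := Real.rpow_nonneg ht p
  have hune : u ≠ 1 := by
    intro h
    apply ht1
    have : (t ^ p) ^ (1 / p) = t := by
      rw [← Real.rpow_mul ht, mul_one_div, div_self hp.ne', Real.rpow_one]
    rw [← this, ← hu, h, Real.one_rpow]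
  have hs : u ^ (q / p) = t ^ q := by
    rw [hu, ← Real.rpow_mul ht, mul_div_cancel₀ q hp.ne']
  have hexp : 1 < q / p := (one_lt_div hp).mpr hpq
  have hb := one_add_mul_self_lt_rpow_one_add (s := u - 1)
    (by linarith) (by intro h; apply hune; linarith) hexp
  rw [add_sub_cancel, hs] at hb
  have core : q * t ^ p - p * t ^ q < q - p := by
    have := mul_lt_mul_of_pos_left hb hp
    have hpd : p * (q / p) = q := mul_div_cancel₀ q hp.ne'
    nlinarith [this]
  have h2q : (0:ℝ) < 2 * q := by linarith
  calc t ^ p / 2 - p / (2 * q) * t ^ q = (q * t ^ p - p * t ^ q) / (2 * q) := by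
        field_simp
    _ < (q - p) / (2 * q) := by gcongr
    _ = 1 / 2 - p / (2 * q) := by field_simp

lemma choquard_aux_le {p q : ℝ} (hp : 0 < p) (hpq : p < q) {t : ℝ} (ht : 0 ≤ t) :
    t ^ p / 2 - p / (2 * q) * t ^ q ≤ 1 / 2 - p / (2 * q) := by
  rcases eq_or_ne t 1 with rfl | h
  · simp
  · exact (choquard_aux_strict hp hpq ht h).le

/-- The energy along the dilation path through a solution of the Choquard equation,
rewritten via the Pohozaev identity, attains its maximum over `[0,∞)` at `t = 1`,
strictly so if `a + b > 0`. -/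
theorem choquard_path_max_at_one
    (N : ℕ) (hN : 3 ≤ N) (α : ℝ) (hα : 0 < α) (a b : ℝ) (ha : 0 ≤ a) (hb : 0 ≤ b) :
    (∀ t : ℝ, 0 ≤ t →
      (t ^ ((N : ℝ) - 2) / 2 - ((N : ℝ) - 2) / (2 * ((N : ℝ) + α)) * t ^ ((N : ℝ) + α)) * a
        + (t ^ (N : ℝ) / 2 - (N : ℝ) / (2 * ((N : ℝ) + α)) * t ^ ((N : ℝ) + α)) * b
      ≤ ((1 : ℝ) ^ ((N : ℝ) - 2) / 2 - ((N : ℝ) - 2) / (2 * ((N : ℝ) + α)) * 1 ^ ((N : ℝ) + α)) * a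
        + ((1 : ℝ) ^ (N : ℝ) / 2 - (N : ℝ) / (2 * ((N : ℝ) + α)) * 1 ^ ((N : ℝ) + α)) * b) ∧
    (0 < a + b → ∀ t : ℝ, 0 ≤ t → t ≠ 1 →
      (t ^ ((N : ℝ) - 2) / 2 - ((N : ℝ) - 2) / (2 * ((N : ℝ) + α)) * t ^ ((N : ℝ) + α)) * a
        + (t ^ (N : ℝ) / 2 - (N : ℝ) / (2 * ((N : ℝ) + α)) * t ^ ((N : ℝ) + α)) * b
      < ((1 : ℝ) ^ ((N : ℝ) - 2) / 2 - ((N : ℝ) - 2) / (2 * ((N : ℝ) + α)) * 1 ^ ((N : ℝ) + α)) * a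
        + ((1 : ℝ) ^ (N : ℝ) / 2 - (N : ℝ) / (2 * ((N : ℝ) + α)) * 1 ^ ((N : ℝ) + α)) * b) := by
  have hN3 : (3:ℝ) ≤ (N:ℝ) := by exact_mod_cast hN
  have hp1 : (0:ℝ) < (N:ℝ) - 2 := by linarith
  have hp2 : (0:ℝ) < (N:ℝ) := by linarith
  have hq1 : (N:ℝ) - 2 < (N:ℝ) + α := by linarith
  have hq2 : (N:ℝ) < (N:ℝ) + α := by linarith
  simp only [Real.one_rpow]
  constructor
  · intro t ht
    have h1 := choquard_aux_le hp1 hq1 ht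
    have h2 := choquard_aux_le hp2 hq2 ht
    have := mul_le_mul_of_nonneg_right h1 ha
    have := mul_le_mul_of_nonneg_right h2 hb
    linarith
  · intro hab t ht ht1
    rcases lt_or_ge 0 a with ha' | ha'
    · have h1 := choquard_aux_strict hp1 hq1 ht ht1
      have h2 := choquard_aux_le hp2 hq2 ht
      have := mul_lt_mul_of_pos_right h1 ha'
      have := mul_le_mul_of_nonneg_right h2 hb
      linarith
    · have hb' : 0 < b := by linarith [le_antisymm ha' ha]
      have h1 := choquard_aux_le hp1 hq1 ht
      have h2 := choquard_aux_strict hp2 hq2 ht ht1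
      have := mul_le_mul_of_nonneg_right h1 ha
      have := mul_lt_mul_of_pos_right h2 hb'
      linarith
end

section
/- Let N ≥ 3, α ∈ (0,N), and suppose u ∈ H¹(ℝ^N) is a nontrivial weak solution of −Δu + u = (I_α * |u|^p)|u|^(p-2)u. Testing against u gives ∫(|∇u|² + |u|²) = ∫(I_α * |u|^p)|u|^p; combined with the Pohozaev identity ((N-2)/2)∫|∇u|² + (N/2)∫|u|² = ((N+α)/(2p))∫(I_α*|u|^p)|u|^p, deduce ((N-2)/2 − (N+α)/(2p))∫|∇u|² + (N/2 − (N+α)/(2p))∫|u|² = 0. Conclude that if p ≤ 1+α/N or p ≥ (N+α)/(N-2), then u = 0 almost everywhere. -/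
open MeasureTheory

/-- Non-existence for the Choquard equation with homogeneous nonlinearity `F(u) = |u|^p/p`
outside the sharp range: from the testing identity and the Pohozaev identity, deduce the
combined identity and conclude `u = 0` a.e. when `p ≤ 1 + α/N` or `p ≥ (N+α)/(N-2)`. -/
theorem choquard_power_nonexistence
    (N : ℕ) (hN : 3 ≤ N) (α p : ℝ) (hα : 0 < α) (hαN : α < N) (hp : 0 < p)
    (hrange : p ≤ 1 + α / N ∨ ((N : ℝ) + α) / ((N : ℝ) - 2) ≤ p)
    (u : EuclideanSpace ℝ (Fin N) → ℝ)
    (hreg : ContDiff ℝ 1 u) (hu2 : MemLp u 2 volume)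
    (hgrad : Integrable (fun x => ‖fderiv ℝ u x‖ ^ 2) volume)
    (D : ℝ)
    (hD : D = ∫ x, (∫ y, (Real.Gamma (((N : ℝ) - α) / 2) /
        (Real.Gamma (α / 2) * Real.pi ^ ((N : ℝ) / 2) * 2 ^ α)) *
        ‖x - y‖ ^ (α - (N : ℝ)) * |u y| ^ p) * |u x| ^ p)
    (htest : (∫ x, ‖fderiv ℝ u x‖ ^ 2) + (∫ x, (u x) ^ 2) = D)
    (hpoho : ((N : ℝ) - 2) / 2 * (∫ x, ‖fderiv ℝ u x‖ ^ 2)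
        + (N : ℝ) / 2 * (∫ x, (u x) ^ 2) = ((N : ℝ) + α) / (2 * p) * D) :
    (((N : ℝ) - 2) / 2 - ((N : ℝ) + α) / (2 * p)) * (∫ x, ‖fderiv ℝ u x‖ ^ 2)
        + ((N : ℝ) / 2 - ((N : ℝ) + α) / (2 * p)) * (∫ x, (u x) ^ 2) = 0
      ∧ u =ᵐ[volume] 0 := by
  set A := ∫ x, ‖fderiv ℝ u x‖ ^ 2 with hA
  set B := ∫ x, (u x) ^ 2 with hB
  have hA0 : 0 ≤ A := integral_nonneg fun x => by positivity
  have hB0 : 0 ≤ B := integral_nonneg fun x => by positivity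
  have hN3 : (3 : ℝ) ≤ (N : ℝ) := by exact_mod_cast hN
  have key : (((N : ℝ) - 2) / 2 - ((N : ℝ) + α) / (2 * p)) * A
      + ((N : ℝ) / 2 - ((N : ℝ) + α) / (2 * p)) * B = 0 := by
    linear_combination hpoho - ((N : ℝ) + α) / (2 * p) * htest
  refine ⟨key, ?_⟩
  have hBzero : B = 0 := by
    have hNα : 0 < (N : ℝ) + α := by linarith
    rcases hrange with h | h
    · -- p ≤ 1 + α/N, coefficients ≤ 0, c1 ≤ -1, get A = 0, then u constant
      have hc2 : (N : ℝ) / 2 - ((N : ℝ) + α) / (2 * p) ≤ 0 := by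
        rw [sub_nonpos, div_le_div_iff₀ (by linarith) (by linarith)]
        have : p * (N : ℝ) ≤ (1 + α / N) * N := by
          apply mul_le_mul_of_nonneg_right h (by linarith)
        rw [add_mul, one_mul, div_mul_cancel₀ _ (by linarith : (N:ℝ) ≠ 0)] at this
        nlinarith
      have hc1 : (((N : ℝ) - 2) / 2 - ((N : ℝ) + α) / (2 * p)) < 0 := by linarith
      have hAz : A = 0 := by nlinarith
      -- fderiv u = 0 a.e., but it's continuous, so everywhere
      have hcont : Continuous fun x => ‖fderiv ℝ u x‖ ^ 2 :=
        ((hreg.continuous_fderiv one_ne_zero).norm.pow 2)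
      have hae : (fun x => ‖fderiv ℝ u x‖ ^ 2) =ᵐ[volume] 0 :=
        (integral_eq_zero_iff_of_nonneg (fun x => by positivity) hgrad).mp hAz
      have heq : (fun x => ‖fderiv ℝ u x‖ ^ 2) = 0 :=
        (hcont.ae_eq_iff_eq volume continuous_const).mp hae
      have hfz : ∀ x, fderiv ℝ u x = 0 := by
        intro x
        have h2 : ‖fderiv ℝ u x‖ ^ 2 = 0 := congrFun heq x
        exact norm_eq_zero.mp ((pow_eq_zero_iff two_ne_zero).mp h2)
      have hconst : ∀ x, u x = u 0 :=
        fun x => is_const_of_fderiv_eq_zero (hreg.differentiable one_ne_zero) hfz x 0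
      -- u is constant; volume is infinite so the constant is 0
      haveI : Nonempty (Fin N) := ⟨⟨0, by omega⟩⟩
      have hint : Integrable (fun x : EuclideanSpace ℝ (Fin N) => (u 0) ^ 2) volume := by
        have := hu2.integrable_sq
        simpa only [funext fun x => congrArg (· ^ 2) (hconst x)] using this
      have := integrable_const_iff.mp hint
      rcases this with h0 | htop
      · have : u 0 = 0 := by
          have := pow_eq_zero_iff (n := 2) (by norm_num) |>.mp h0
          exact this
        rw [hB]
        have : ∀ x, (u x)^2 = 0 := fun x => by rw [hconst x, this]; ring
        simp [this]
      · exact absurd htop.measure_univ_lt_top (by simp [measure_univ_of_isAddLeftInvariant])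
    · -- p ≥ (N+α)/(N-2)
      have hc1 : 0 ≤ ((N : ℝ) - 2) / 2 - ((N : ℝ) + α) / (2 * p) := by
        rw [sub_nonneg, div_le_div_iff₀ (by linarith) (by linarith)]
        have := (div_le_iff₀ (by linarith : (0:ℝ) < (N:ℝ) - 2)).mp h
        nlinarith
      have hc2 : 1 ≤ (N : ℝ) / 2 - ((N : ℝ) + α) / (2 * p) := by linarith
      nlinarith
  have := (integral_eq_zero_iff_of_nonneg (fun x => by positivity) hu2.integrable_sq).mp hBzero
  filter_upwards [this] with x hx
  have : u x ^ 2 = 0 := hx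
  exact pow_eq_zero_iff (by norm_num) |>.mp this
end

section
/- Let N ≥ 3, α ∈ (0, N), and p = 1 + α/N. For the Choquard equation −Δu + u = (I_α*|u|^p)|u|^(p-2)u, the two identities ∫(|∇u|²+|u|²) = D and ((N-2)/2)∫|∇u|² + (N/2)∫|u|² = ((N+α)/(2p))·D (with D = ∫(I_α*|u|^p)|u|^p) imply ∫|∇u|² = 0, hence every H¹ solution is constant, hence zero. -/
open MeasureTheory

/-- Endpoint case `p = 1 + α/N` of the non-existence theorem: the testing identity and the
Pohozaev identity force `∫|∇u|² = 0`, hence every `H¹` solution is constant, hence zero. -/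
theorem choquard_lower_endpoint_nonexistence
    (N : ℕ) (hN : 3 ≤ N) (α p : ℝ) (hα : 0 < α) (hαN : α < N)
    (hp : p = 1 + α / N)
    (u : EuclideanSpace ℝ (Fin N) → ℝ)
    (hreg : ContDiff ℝ 1 u) (hu2 : MemLp u 2 volume)
    (hgrad : Integrable (fun x => ‖fderiv ℝ u x‖ ^ 2) volume)
    (D : ℝ) (hD : 0 ≤ D)
    (htest : (∫ x, ‖fderiv ℝ u x‖ ^ 2) + (∫ x, (u x) ^ 2) = D)
    (hpoho : ((N : ℝ) - 2) / 2 * (∫ x, ‖fderiv ℝ u x‖ ^ 2)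
        + (N : ℝ) / 2 * (∫ x, (u x) ^ 2) = ((N : ℝ) + α) / (2 * p) * D) :
    (∫ x, ‖fderiv ℝ u x‖ ^ 2) = 0 ∧ u =ᵐ[volume] 0 := by
  have hN0 : (0 : ℝ) < N := by positivity
  have hNα : (0 : ℝ) < N + α := by linarith
  have hkey : ((N : ℝ) + α) / (2 * p) = (N : ℝ) / 2 := by
    rw [hp]
    field_simp
  rw [hkey, ← htest] at hpoho
  have hG : (∫ x, ‖fderiv ℝ u x‖ ^ 2) = 0 := by linarith
  refine ⟨hG, ?_⟩
  -- the integrand is continuous, nonnegative, integrable, with zero integral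
  have hcont : Continuous fun x => ‖fderiv ℝ u x‖ ^ 2 :=
    ((hreg.continuous_fderiv one_ne_zero).norm.pow 2)
  have hae : (fun x => ‖fderiv ℝ u x‖ ^ 2) =ᵐ[volume] 0 :=
    (MeasureTheory.integral_eq_zero_iff_of_nonneg (fun x => by positivity) hgrad).mp hG
  have heq : (fun x => ‖fderiv ℝ u x‖ ^ 2) = 0 :=
    (Continuous.ae_eq_iff_eq volume hcont continuous_const).mp hae
  have hfd : ∀ x, fderiv ℝ u x = 0 := by
    intro x
    have := congrFun heq x
    simp only [Pi.zero_apply] at this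
    have h0 : ‖fderiv ℝ u x‖ = 0 := by nlinarith [norm_nonneg (fderiv ℝ u x)]
    exact norm_eq_zero.mp h0
  have hconst : ∀ x, u x = u 0 :=
    fun x => is_const_of_fderiv_eq_zero (hreg.differentiable one_ne_zero) hfd x 0
  -- the constant must be zero since u ∈ L² and the measure is infinite
  have hu0 : u 0 = 0 := by
    by_contra hc
    haveI : NeZero N := ⟨by omega⟩
    have hμtop : (volume : Measure (EuclideanSpace ℝ (Fin N))) Set.univ = ⊤ :=
      measure_univ_of_isAddLeftInvariant (volume : Measure (EuclideanSpace ℝ (Fin N)))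
    have hμ0 : (volume : Measure (EuclideanSpace ℝ (Fin N))) ≠ 0 := by
      intro h
      rw [h] at hμtop
      simp at hμtop
    have hueq : u = fun _ => u 0 := funext hconst
    have hlt := hu2.eLpNorm_lt_top
    rw [hueq, eLpNorm_const (u 0) (by norm_num) hμ0, hμtop,
      ENNReal.top_rpow_of_pos (by norm_num),
      ENNReal.mul_top (by simpa using hc)] at hlt
    exact absurd hlt (by simp)
  exact Filter.Eventually.of_forall fun x => by rw [hconst x, hu0]; rfl
end
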